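/- One-dimensional trigonometric product bound: there exists a constant C such that for all positive integers n, n₁, n₂, n₃, |∫₀¹ sin(nπr) sin(n₁πr) sin(n₂πr) sin(n₃πr) r^{-2} dr| ≤ C min(n, n₁, n₂, n₃). -/

import Mathlib

open Real intervalIntegral MeasureTheory Set

/-! ### Auxiliary lemmas -/

lemma abs_sinc_le (u : ℝ) : |Real.sin u / u| ≤ 1 := by
  rcases eq_or_ne u 0 with rfl | h
  · simp
  · rw [abs_div]
    exact div_le_one_of_le₀ Real.abs_sin_le_abs (abs_nonneg u)

lemma one_sub_cos_le (x : ℝ) : |1 - Real.cos x| ≤ x ^ 2 / 2 := by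
  have h : Real.sin (x / 2) ^ 2 = 1 / 2 - Real.cos (2 * (x / 2)) / 2 := Real.sin_sq_eq_half_sub _
  rw [show 2 * (x / 2) = x by ring] at h
  have h2 : Real.sin (x / 2) ^ 2 ≤ (x / 2) ^ 2 := by
    rw [← sq_abs (Real.sin _), ← sq_abs (x / 2)]
    exact pow_le_pow_left₀ (abs_nonneg _) Real.abs_sin_le_abs 2
  have h3 : 1 - Real.cos x = 2 * Real.sin (x / 2) ^ 2 := by rw [h]; ring
  rw [abs_of_nonneg (by nlinarith [Real.cos_le_one x])]
  nlinarith

/-- bounded + continuous on `(0,1]` implies interval integrable on `[0,1]`. -/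
lemma intInt01 {f : ℝ → ℝ} (M : ℝ) (hc : ContinuousOn f (Set.Ioc 0 1))
    (hb : ∀ x ∈ Set.Ioc (0:ℝ) 1, |f x| ≤ M) :
    IntervalIntegrable f volume 0 1 := by
  rw [intervalIntegrable_iff_integrableOn_Ioc_of_le zero_le_one]
  refine ⟨hc.aestronglyMeasurable measurableSet_Ioc, ?_⟩
  apply MeasureTheory.HasFiniteIntegral.restrict_of_bounded (C := M) measure_Ioc_lt_top
  exact (ae_restrict_iff' measurableSet_Ioc).2 (.of_forall fun x hx => by
    rw [Real.norm_eq_abs]; exact hb x hx)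

lemma sinc_intInt (a b : ℝ) : IntervalIntegrable (fun u => Real.sin u / u) volume a b := by
  rw [intervalIntegrable_iff]
  refine ⟨((measurable_sin.div measurable_id).aestronglyMeasurable).restrict, ?_⟩
  apply MeasureTheory.HasFiniteIntegral.restrict_of_bounded (C := 1) measure_Ioc_lt_top
  exact .of_forall fun x => by rw [Real.norm_eq_abs]; exact abs_sinc_le x

/-! ### The sine integral -/

noncomputable def Si (x : ℝ) : ℝ := ∫ u in (0:ℝ)..x, Real.sin u / u

lemma Si_tail {x y : ℝ} (hx : 0 < x) (hxy : x ≤ y) : |Si y - Si x| ≤ 2 / x := by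
  have hxy0 : 0 < y := lt_of_lt_of_le hx hxy
  have hne : ∀ u ∈ uIcc x y, u ≠ 0 := by
    intro u hu
    rw [uIcc_of_le hxy] at hu
    exact (lt_of_lt_of_le hx hu.1).ne'
  have hsub : Si y - Si x = ∫ u in x..y, Real.sin u / u := by
    simp only [Si]
    exact integral_interval_sub_left (sinc_intInt 0 y) (sinc_intInt 0 x)
  have hderiv : ∀ u ∈ uIcc x y, HasDerivAt (fun v => -Real.cos v / v)
      (Real.sin u / u + Real.cos u / u ^ 2) u := by
    intro u hu
    have hu0 := hne u hu
    have h1 : HasDerivAt (fun v => -Real.cos v) (Real.sin u) u := by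
      exact (Real.hasDerivAt_cos u).neg.congr_deriv (neg_neg _)
    have h2 := h1.div (hasDerivAt_id u) hu0
    refine h2.congr_deriv ?_
    simp only [id]
    field_simp
    ring
  have hcont2 : ContinuousOn (fun u => Real.cos u / u ^ 2) (uIcc x y) :=
    Real.continuous_cos.continuousOn.div (continuousOn_pow 2)
      (fun u hu => pow_ne_zero 2 (hne u hu))
  have hcont : ContinuousOn (fun u => Real.sin u / u + Real.cos u / u ^ 2) (uIcc x y) :=
    (Real.continuous_sin.continuousOn.div continuousOn_id hne).add hcont2
  have hint : IntervalIntegrable (fun u => Real.sin u / u + Real.cos u / u ^ 2) volume x y :=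
    hcont.intervalIntegrable
  have hftc := integral_eq_sub_of_hasDerivAt hderiv hint
  have hint2 : IntervalIntegrable (fun u => Real.cos u / u ^ 2) volume x y :=
    hcont2.intervalIntegrable
  have hsplit : (∫ u in x..y, (Real.sin u / u + Real.cos u / u ^ 2))
      = (∫ u in x..y, Real.sin u / u) + ∫ u in x..y, Real.cos u / u ^ 2 :=
    integral_add (sinc_intInt x y) hint2
  have hinv : ∀ u ∈ uIcc x y, HasDerivAt (fun v : ℝ => -v⁻¹) ((u ^ 2)⁻¹) u := by
    intro u hu
    have := (hasDerivAt_inv (hne u hu)).neg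
    refine this.congr_deriv ?_
    simp
  have hinvint : IntervalIntegrable (fun u : ℝ => (u ^ 2)⁻¹) volume x y :=
    (((continuousOn_pow 2).inv₀ (fun u hu => pow_ne_zero 2 (hne u hu)))).intervalIntegrable
  have hval2 : (∫ u in x..y, (u ^ 2)⁻¹) = 1 / x - 1 / y := by
    rw [integral_eq_sub_of_hasDerivAt hinv hinvint]; ring
  have habs2 : |∫ u in x..y, Real.cos u / u ^ 2| ≤ 1 / x - 1 / y := by
    rw [← hval2]
    calc |∫ u in x..y, Real.cos u / u ^ 2| ≤ ∫ u in x..y, |Real.cos u / u ^ 2| :=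
          abs_integral_le_integral_abs hxy
      _ ≤ ∫ u in x..y, (u ^ 2)⁻¹ := by
          apply integral_mono_on hxy hint2.abs hinvint
          intro u hu
          have hu0 : (0:ℝ) < u := lt_of_lt_of_le hx hu.1
          rw [abs_div, abs_of_nonneg (by positivity : (0:ℝ) ≤ u ^ 2), div_le_iff₀ (by positivity)]
          rw [inv_mul_cancel₀ (by positivity : (u:ℝ) ^ 2 ≠ 0)]
          exact Real.abs_cos_le_one u
  have hkey : Si y - Si x = (-Real.cos y / y - -Real.cos x / x) - ∫ u in x..y, Real.cos u / u ^ 2 := by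
    rw [hsub]; rw [hsplit] at hftc; linarith
  rw [hkey]
  have h1 : |(-Real.cos y / y)| ≤ 1 / y := by
    rw [abs_div, abs_of_pos hxy0, abs_neg]
    gcongr
    exact Real.abs_cos_le_one y
  have h2 : |(-Real.cos x / x)| ≤ 1 / x := by
    rw [abs_div, abs_of_pos hx, abs_neg]
    gcongr
    exact Real.abs_cos_le_one x
  calc |(-Real.cos y / y - -Real.cos x / x) - ∫ u in x..y, Real.cos u / u ^ 2|
      ≤ |(-Real.cos y / y - -Real.cos x / x)| + |∫ u in x..y, Real.cos u / u ^ 2| := abs_sub _ _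
    _ ≤ (|(-Real.cos y / y)| + |(-Real.cos x / x)|) + (1 / x - 1 / y) :=
        add_le_add (abs_sub _ _) habs2
    _ ≤ (1 / y + 1 / x) + (1 / x - 1 / y) :=
        add_le_add (add_le_add h1 h2) (le_refl _)
    _ = 2 / x := by ring

lemma Si_abs {x : ℝ} (hx : 0 ≤ x) : |Si x| ≤ 3 := by
  have hsmall : ∀ z : ℝ, 0 ≤ z → z ≤ 2 → |Si z| ≤ 2 := by
    intro z hz0 hz2
    have := intervalIntegral.norm_integral_le_of_norm_le_const
      (C := 1) (f := fun u => Real.sin u / u) (a := 0) (b := z)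
      (fun u _ => by rw [Real.norm_eq_abs]; exact abs_sinc_le u)
    rw [Real.norm_eq_abs] at this
    calc |Si z| ≤ 1 * |z - 0| := this
      _ ≤ 2 := by rw [abs_of_nonneg (by linarith)]; linarith
  rcases le_or_gt x 2 with h | h
  · exact (hsmall x hx h).trans (by norm_num)
  · have h1 : |Si x - Si 2| ≤ 2 / 2 := Si_tail (by norm_num) h.le
    have h2 : |Si 2| ≤ 2 := hsmall 2 (by norm_num) le_rfl
    calc |Si x| = |Si 2 + (Si x - Si 2)| := by ring_nf
      _ ≤ |Si 2| + |Si x - Si 2| := abs_add_le _ _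
      _ ≤ 2 + 2 / 2 := add_le_add h2 h1
      _ = 3 := by norm_num

lemma T_eq (β : ℝ) (hβ : 0 ≤ β) :
    (∫ r in (0:ℝ)..1, β * Real.sin (β * r) / r) = β * Si β := by
  rcases eq_or_lt_of_le hβ with rfl | hβ'
  · simp [Si]
  · have h1 : ∀ r : ℝ, β * Real.sin (β * r) / r = (fun u => β ^ 2 * (Real.sin u / u)) (β * r) := by
      intro r
      rcases eq_or_ne r 0 with rfl | hr
      · simp
      · have : β * r ≠ 0 := mul_ne_zero hβ'.ne' hr
        field_simp
    rw [intervalIntegral.integral_congr (g := fun r => (fun u => β ^ 2 * (Real.sin u / u)) (β * r))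
      (fun r _ => h1 r)]
    rw [intervalIntegral.integral_comp_mul_left (fun u => β ^ 2 * (Real.sin u / u)) hβ'.ne']
    rw [mul_zero, mul_one, intervalIntegral.integral_const_mul, smul_eq_mul]
    rw [show (∫ u in (0:ℝ)..β, Real.sin u / u) = Si β from rfl]
    field_simp

/-! ### The cosine-difference integral -/

lemma cos_diff_sq_bound (α β r : ℝ) :
    |Real.cos (α * r) - Real.cos (β * r)| ≤ (α ^ 2 + β ^ 2) / 2 * r ^ 2 := by
  have h1 := one_sub_cos_le (α * r)
  have h2 := one_sub_cos_le (β * r)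
  calc |Real.cos (α * r) - Real.cos (β * r)|
      = |(1 - Real.cos (β * r)) - (1 - Real.cos (α * r))| := by ring_nf
    _ ≤ |1 - Real.cos (β * r)| + |1 - Real.cos (α * r)| := abs_sub _ _
    _ ≤ (β * r) ^ 2 / 2 + (α * r) ^ 2 / 2 := add_le_add h2 h1
    _ = (α ^ 2 + β ^ 2) / 2 * r ^ 2 := by ring

lemma sin_lin_bound (α r : ℝ) (hα : 0 ≤ α) : |α * Real.sin (α * r)| ≤ α ^ 2 * |r| := by
  rw [abs_mul, abs_of_nonneg hα]
  calc α * |Real.sin (α * r)| ≤ α * |α * r| := by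
        apply mul_le_mul_of_nonneg_left Real.abs_sin_le_abs hα
    _ = α ^ 2 * |r| := by rw [abs_mul, abs_of_nonneg hα]; ring

lemma intCosDiff (a b : ℝ) :
    IntervalIntegrable (fun r => (Real.cos (a * r) - Real.cos (b * r)) / r ^ 2) volume 0 1 := by
  apply intInt01 ((a ^ 2 + b ^ 2) / 2)
  · apply ContinuousOn.div
    · exact ((Real.continuous_cos.comp (continuous_const.mul continuous_id)).sub
        (Real.continuous_cos.comp (continuous_const.mul continuous_id))).continuousOn
    · exact (continuous_pow 2).continuousOn
    · intro r hr; exact pow_ne_zero 2 hr.1.ne'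
  · intro r hr
    rw [abs_div, div_le_iff₀ (abs_pos.2 (pow_ne_zero 2 hr.1.ne'))]
    calc |Real.cos (a * r) - Real.cos (b * r)| ≤ (a ^ 2 + b ^ 2) / 2 * r ^ 2 :=
          cos_diff_sq_bound a b r
      _ = (a ^ 2 + b ^ 2) / 2 * |r ^ 2| := by
          rw [abs_of_nonneg (by positivity : (0:ℝ) ≤ r ^ 2)]

lemma D_eq (α β : ℝ) (hα : 0 ≤ α) (hβ : 0 ≤ β) :
    (∫ r in (0:ℝ)..1, (Real.cos (α * r) - Real.cos (β * r)) / r ^ 2)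
      = (Real.cos β - Real.cos α) + (β * Si β - α * Si α) := by
  set C : ℝ := (α ^ 2 + β ^ 2) / 2 with hC
  have hC0 : 0 ≤ C := by positivity
  set F : ℝ → ℝ := fun r => (Real.cos (β * r) - Real.cos (α * r)) / r with hF
  set g : ℝ → ℝ := fun r =>
    (Real.cos (α * r) - Real.cos (β * r)) / r ^ 2
      + (α * Real.sin (α * r) - β * Real.sin (β * r)) / r with hg
  set h : ℝ → ℝ := fun r => (α * Real.sin (α * r) - β * Real.sin (β * r)) / r with hh
  have hFb : ∀ r : ℝ, |F r| ≤ C * |r| := by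
    intro r
    rcases eq_or_ne r 0 with rfl | hr
    · simp [hF]
    · rw [hF]
      simp only
      rw [abs_div]
      rw [div_le_iff₀ (abs_pos.2 hr)]
      calc |Real.cos (β * r) - Real.cos (α * r)| ≤ (β ^ 2 + α ^ 2) / 2 * r ^ 2 :=
            cos_diff_sq_bound β α r
        _ = C * |r| * |r| := by rw [hC, ← sq_abs r]; ring
  have hFcont : ContinuousOn F (Icc (0:ℝ) 1) := by
    intro r hr
    rcases eq_or_ne r 0 with rfl | hr0
    · have hF0 : F 0 = 0 := by simp [hF]
      rw [ContinuousWithinAt, hF0]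
      apply squeeze_zero_norm hFb
      have : Filter.Tendsto (fun r : ℝ => C * |r|) (nhds 0) (nhds (C * |(0:ℝ)|)) :=
        (continuous_const.mul continuous_abs).tendsto 0
      simpa using this.mono_left nhdsWithin_le_nhds
    · apply ContinuousAt.continuousWithinAt
      exact ((Real.continuous_cos.comp (continuous_const.mul continuous_id)).sub
        (Real.continuous_cos.comp (continuous_const.mul continuous_id))).continuousAt.div
        continuousAt_id hr0
  have hFderiv : ∀ r ∈ Ioo (0:ℝ) 1, HasDerivWithinAt F (g r) (Ioi r) r := by
    intro r hr
    have hr0 : r ≠ 0 := hr.1.ne'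
    have h1 : HasDerivAt (fun v => Real.cos (β * v)) (-β * Real.sin (β * r)) r := by
      have := (Real.hasDerivAt_cos (β * r)).comp r ((hasDerivAt_id r).const_mul β)
      exact this.congr_deriv (by ring)
    have h2 : HasDerivAt (fun v => Real.cos (α * v)) (-α * Real.sin (α * r)) r := by
      have := (Real.hasDerivAt_cos (α * r)).comp r ((hasDerivAt_id r).const_mul α)
      exact this.congr_deriv (by ring)
    have h3 := ((h1.sub h2).div (hasDerivAt_id r) hr0)
    have h5 := h3.hasDerivWithinAt (s := Ioi r)
    apply h5.congr_deriv
    simp only [hg, id_eq, Pi.sub_apply]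
    field_simp
    ring
  have hbound_h : ∀ r ∈ Set.Ioc (0:ℝ) 1, |h r| ≤ α ^ 2 + β ^ 2 := by
    intro r hr
    rw [hh]
    simp only
    rw [abs_div, div_le_iff₀ (abs_pos.2 hr.1.ne')]
    calc |α * Real.sin (α * r) - β * Real.sin (β * r)|
        ≤ |α * Real.sin (α * r)| + |β * Real.sin (β * r)| := abs_sub _ _
      _ ≤ α ^ 2 * |r| + β ^ 2 * |r| := add_le_add (sin_lin_bound α r hα) (sin_lin_bound β r hβ)
      _ = (α ^ 2 + β ^ 2) * |r| := by ring
  have hcont_h : ContinuousOn h (Set.Ioc (0:ℝ) 1) := by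
    apply ContinuousOn.div
    · exact ((continuous_const.mul (Real.continuous_sin.comp
        (continuous_const.mul continuous_id))).sub
        (continuous_const.mul (Real.continuous_sin.comp
        (continuous_const.mul continuous_id)))).continuousOn
    · exact continuous_id.continuousOn
    · intro r hr; exact hr.1.ne'
  have hint_f : IntervalIntegrable (fun r => (Real.cos (α * r) - Real.cos (β * r)) / r ^ 2)
      volume 0 1 := intCosDiff α β
  have hint_h : IntervalIntegrable h volume 0 1 := intInt01 (α ^ 2 + β ^ 2) hcont_h hbound_h
  have hint_g : IntervalIntegrable g volume 0 1 := by
    have : g = (fun r => (Real.cos (α * r) - Real.cos (β * r)) / r ^ 2) + h := by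
      funext r; simp [hg, hh]
    rw [this]
    exact hint_f.add hint_h
  have hftc : (∫ r in (0:ℝ)..1, g r) = F 1 - F 0 :=
    integral_eq_sub_of_hasDeriv_right_of_le zero_le_one hFcont hFderiv hint_g
  have hF1 : F 1 = Real.cos β - Real.cos α := by simp [hF]
  have hF0 : F 0 = 0 := by simp [hF]
  have hsplit : (∫ r in (0:ℝ)..1, (Real.cos (α * r) - Real.cos (β * r)) / r ^ 2)
      = (∫ r in (0:ℝ)..1, g r) - ∫ r in (0:ℝ)..1, h r := by
    rw [← integral_sub hint_g hint_h]
    apply intervalIntegral.integral_congr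
    intro r _
    simp only [hg, hh]
    ring
  have hh_val : (∫ r in (0:ℝ)..1, h r) = α * Si α - β * Si β := by
    have e1 : ∀ r : ℝ, h r = α * Real.sin (α * r) / r - β * Real.sin (β * r) / r := by
      intro r; rw [hh]; simp only; rw [sub_div]
    rw [intervalIntegral.integral_congr (g := fun r =>
      α * Real.sin (α * r) / r - β * Real.sin (β * r) / r) (fun r _ => e1 r)]
    have hint_t : ∀ γ : ℝ, 0 ≤ γ →
        IntervalIntegrable (fun r => γ * Real.sin (γ * r) / r) volume 0 1 := by
      intro γ hγ
      apply intInt01 (γ ^ 2)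
      · apply ContinuousOn.div
        · exact (continuous_const.mul (Real.continuous_sin.comp
            (continuous_const.mul continuous_id))).continuousOn
        · exact continuous_id.continuousOn
        · intro r hr; exact hr.1.ne'
      · intro r hr
        rw [abs_div, div_le_iff₀ (abs_pos.2 hr.1.ne')]
        calc |γ * Real.sin (γ * r)| ≤ γ ^ 2 * |r| := sin_lin_bound γ r hγ
          _ ≤ γ ^ 2 * |r| := le_refl _
    rw [intervalIntegral.integral_sub (hint_t α hα) (hint_t β hβ)]
    rw [T_eq α hα, T_eq β hβ]
  rw [hsplit, hftc, hF1, hF0, hh_val]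
  ring

lemma D_bound {α β : ℝ} (hα : 0 ≤ α) (hαβ : α ≤ β) :
    |∫ r in (0:ℝ)..1, (Real.cos (α * r) - Real.cos (β * r)) / r ^ 2| ≤ 14 + 3 * (β - α) := by
  have hβ : 0 ≤ β := hα.trans hαβ
  rw [D_eq α β hα hβ]
  have h1 : |Real.cos β - Real.cos α| ≤ 2 := by
    calc |Real.cos β - Real.cos α| ≤ |Real.cos β| + |Real.cos α| := abs_sub _ _
      _ ≤ 1 + 1 := add_le_add (Real.abs_cos_le_one β) (Real.abs_cos_le_one α)
      _ = 2 := by norm_num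
  have h2 : |β * Si β - α * Si α| ≤ 3 * (β - α) + 12 := by
    have key : β * Si β - α * Si α = (β - α) * Si β + α * (Si β - Si α) := by ring
    rw [key]
    have hb1 : |(β - α) * Si β| ≤ (β - α) * 3 := by
      rw [abs_mul, abs_of_nonneg (by linarith)]
      exact mul_le_mul_of_nonneg_left (Si_abs hβ) (by linarith)
    have hb2 : |α * (Si β - Si α)| ≤ 12 := by
      rcases le_or_gt α 2 with hc | hc
      · rw [abs_mul, abs_of_nonneg hα]
        have : |Si β - Si α| ≤ 6 := by
          calc |Si β - Si α| ≤ |Si β| + |Si α| := abs_sub _ _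
            _ ≤ 3 + 3 := add_le_add (Si_abs hβ) (Si_abs hα)
            _ = 6 := by norm_num
        calc α * |Si β - Si α| ≤ 2 * 6 := by
              apply mul_le_mul hc this (abs_nonneg _) (by norm_num)
          _ = 12 := by norm_num
      · rw [abs_mul, abs_of_nonneg hα]
        have ht : |Si β - Si α| ≤ 2 / α := Si_tail (by linarith) hαβ
        calc α * |Si β - Si α| ≤ α * (2 / α) := mul_le_mul_of_nonneg_left ht hα
          _ = 2 := by field_simp
          _ ≤ 12 := by norm_num
    calc |(β - α) * Si β + α * (Si β - Si α)| ≤ |(β - α) * Si β| + |α * (Si β - Si α)| := abs_add_le _ _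
      _ ≤ (β - α) * 3 + 12 := add_le_add hb1 hb2
      _ = 3 * (β - α) + 12 := by ring
  calc |(Real.cos β - Real.cos α) + (β * Si β - α * Si α)|
      ≤ |Real.cos β - Real.cos α| + |β * Si β - α * Si α| := abs_add_le _ _
    _ ≤ 2 + (3 * (β - α) + 12) := add_le_add h1 h2
    _ = 14 + 3 * (β - α) := by ring

lemma D_bound2 (a b : ℝ) :
    |∫ r in (0:ℝ)..1, (Real.cos (a * r) - Real.cos (b * r)) / r ^ 2| ≤ 14 + 3 * |b - a| := by
  have habs : ∀ c r : ℝ, r ∈ uIcc (0:ℝ) 1 → Real.cos (c * r) = Real.cos (|c| * r) := by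
    intro c r hr
    rw [uIcc_of_le zero_le_one] at hr
    rw [show |c| * r = |c * r| by rw [abs_mul, abs_of_nonneg hr.1], Real.cos_abs]
  have hcongr : (∫ r in (0:ℝ)..1, (Real.cos (a * r) - Real.cos (b * r)) / r ^ 2)
      = ∫ r in (0:ℝ)..1, (Real.cos (|a| * r) - Real.cos (|b| * r)) / r ^ 2 := by
    apply intervalIntegral.integral_congr
    intro r hr
    simp only [habs a r hr, habs b r hr]
  rw [hcongr]
  rcases le_total |a| |b| with hab | hab
  · have := D_bound (abs_nonneg a) hab
    calc |∫ r in (0:ℝ)..1, (Real.cos (|a| * r) - Real.cos (|b| * r)) / r ^ 2|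
        ≤ 14 + 3 * (|b| - |a|) := this
      _ ≤ 14 + 3 * |b - a| := by
          have h2 : |b| - |a| ≤ |b - a| := abs_sub_abs_le_abs_sub b a
          linarith
  · have hneg : (∫ r in (0:ℝ)..1, (Real.cos (|a| * r) - Real.cos (|b| * r)) / r ^ 2)
        = -∫ r in (0:ℝ)..1, (Real.cos (|b| * r) - Real.cos (|a| * r)) / r ^ 2 := by
      rw [← intervalIntegral.integral_neg]
      apply intervalIntegral.integral_congr
      intro r _
      ring
    rw [hneg, abs_neg]
    have := D_bound (abs_nonneg b) hab
    calc |∫ r in (0:ℝ)..1, (Real.cos (|b| * r) - Real.cos (|a| * r)) / r ^ 2|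
        ≤ 14 + 3 * (|a| - |b|) := this
      _ ≤ 14 + 3 * |b - a| := by
          have h2 : |a| - |b| ≤ |a - b| := abs_sub_abs_le_abs_sub a b
          have h4 : |a - b| = |b - a| := abs_sub_comm a b
          linarith

/-! ### Product-to-sum and the main estimate -/

lemma sin4 (a b c d : ℝ) :
    Real.sin a * Real.sin b * Real.sin c * Real.sin d
    = (1/8) * (((Real.cos (b+c-d-a) - Real.cos (b+c-d+a))
        + (Real.cos (b-c+d-a) - Real.cos (b-c+d+a)))
        + ((Real.cos (c+d-b-a) - Real.cos (c+d-b+a))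
        - (Real.cos (b+c+d-a) - Real.cos (b+c+d+a)))) := by
  simp only [Real.cos_add, Real.cos_sub, Real.sin_add, Real.sin_sub]
  ring

lemma aux_bound (n n₁ n₂ n₃ : ℕ+) :
    |∫ r in (0 : ℝ)..1,
        Real.sin ((n : ℝ) * π * r) * Real.sin ((n₁ : ℝ) * π * r) *
          Real.sin ((n₂ : ℝ) * π * r) * Real.sin ((n₃ : ℝ) * π * r) / r ^ 2|
      ≤ 33 * (n : ℝ) := by
  set w := (n:ℝ) * π with hw
  set x := (n₁:ℝ) * π with hx
  set y := (n₂:ℝ) * π with hy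
  set z := (n₃:ℝ) * π with hz
  have key : ∀ r : ℝ, Real.sin (w*r) * Real.sin (x*r) * Real.sin (y*r) * Real.sin (z*r) / r ^ 2
      = 1/8 * ((((Real.cos ((x+y-z-w)*r) - Real.cos ((x+y-z+w)*r))/r^2
          + (Real.cos ((x-y+z-w)*r) - Real.cos ((x-y+z+w)*r))/r^2)
        + ((Real.cos ((y+z-x-w)*r) - Real.cos ((y+z-x+w)*r))/r^2
          - (Real.cos ((x+y+z-w)*r) - Real.cos ((x+y+z+w)*r))/r^2))) := by
    intro r
    have h := sin4 (w*r) (x*r) (y*r) (z*r)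
    rw [show x*r+y*r-z*r-w*r = (x+y-z-w)*r from by ring,
        show x*r+y*r-z*r+w*r = (x+y-z+w)*r from by ring,
        show x*r-y*r+z*r-w*r = (x-y+z-w)*r from by ring,
        show x*r-y*r+z*r+w*r = (x-y+z+w)*r from by ring,
        show y*r+z*r-x*r-w*r = (y+z-x-w)*r from by ring,
        show y*r+z*r-x*r+w*r = (y+z-x+w)*r from by ring,
        show x*r+y*r+z*r-w*r = (x+y+z-w)*r from by ring,
        show x*r+y*r+z*r+w*r = (x+y+z+w)*r from by ring] at h
    rw [h]
    ring
  have hcg : (∫ r in (0:ℝ)..1, Real.sin (w*r) * Real.sin (x*r) * Real.sin (y*r) * Real.sin (z*r) / r ^ 2)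
      = ∫ r in (0:ℝ)..1, 1/8 * ((((Real.cos ((x+y-z-w)*r) - Real.cos ((x+y-z+w)*r))/r^2
          + (Real.cos ((x-y+z-w)*r) - Real.cos ((x-y+z+w)*r))/r^2)
        + ((Real.cos ((y+z-x-w)*r) - Real.cos ((y+z-x+w)*r))/r^2
          - (Real.cos ((x+y+z-w)*r) - Real.cos ((x+y+z+w)*r))/r^2))) :=
    intervalIntegral.integral_congr (fun r _ => key r)
  rw [hcg]
  rw [intervalIntegral.integral_const_mul]
  rw [intervalIntegral.integral_add ((intCosDiff _ _).add (intCosDiff _ _))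
    ((intCosDiff _ _).sub (intCosDiff _ _))]
  rw [intervalIntegral.integral_add (intCosDiff _ _) (intCosDiff _ _)]
  rw [intervalIntegral.integral_sub (intCosDiff _ _) (intCosDiff _ _)]
  have hw0 : 0 ≤ w := by
    rw [hw]; positivity
  have hdiff : ∀ K : ℝ, |(K + w) - (K - w)| = 2 * w := by
    intro K
    rw [show (K + w) - (K - w) = 2*w from by ring, abs_of_nonneg (by linarith)]
  have e1 := D_bound2 (x+y-z-w) (x+y-z+w)
  have e2 := D_bound2 (x-y+z-w) (x-y+z+w)
  have e3 := D_bound2 (y+z-x-w) (y+z-x+w)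
  have e4 := D_bound2 (x+y+z-w) (x+y+z+w)
  rw [hdiff (x+y-z)] at e1
  rw [hdiff (x-y+z)] at e2
  rw [hdiff (y+z-x)] at e3
  rw [hdiff (x+y+z)] at e4
  set I1 := ∫ r in (0:ℝ)..1, (Real.cos ((x+y-z-w)*r) - Real.cos ((x+y-z+w)*r))/r^2
  set I2 := ∫ r in (0:ℝ)..1, (Real.cos ((x-y+z-w)*r) - Real.cos ((x-y+z+w)*r))/r^2
  set I3 := ∫ r in (0:ℝ)..1, (Real.cos ((y+z-x-w)*r) - Real.cos ((y+z-x+w)*r))/r^2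
  set I4 := ∫ r in (0:ℝ)..1, (Real.cos ((x+y+z-w)*r) - Real.cos ((x+y+z+w)*r))/r^2
  have hS : |(I1 + I2) + (I3 - I4)| ≤ 4 * (14 + 3 * (2*w)) := by
    calc |(I1 + I2) + (I3 - I4)| ≤ |I1 + I2| + |I3 - I4| := abs_add_le _ _
      _ ≤ (|I1| + |I2|) + (|I3| + |I4|) := add_le_add (abs_add_le _ _) (abs_sub _ _)
      _ ≤ 4 * (14 + 3 * (2*w)) := by linarith
  have hn1 : (1:ℝ) ≤ (n:ℝ) := by exact_mod_cast n.one_le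
  have hpi : π ≤ 4 := Real.pi_le_four
  have hpi0 : 0 < π := Real.pi_pos
  calc |1/8 * ((I1 + I2) + (I3 - I4))| = 1/8 * |(I1 + I2) + (I3 - I4)| := by
        rw [abs_mul]; norm_num
    _ ≤ 1/8 * (4 * (14 + 3 * (2*w))) := by linarith
    _ = 7 + 3 * w := by ring
    _ ≤ 33 * (n:ℝ) := by
        rw [hw]
        nlinarith

/-- One-dimensional trigonometric product bound: there is a constant `C` such
that for all positive integers `n, n₁, n₂, n₃`,
`|∫₀¹ sin(nπr) sin(n₁πr) sin(n₂πr) sin(n₃πr) r⁻² dr| ≤ C·min(n,n₁,n₂,n₃)`. -/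
theorem trig_product_bound :
    ∃ C : ℝ, 0 < C ∧ ∀ n n₁ n₂ n₃ : ℕ+,
      |∫ r in (0 : ℝ)..1,
          Real.sin ((n : ℝ) * π * r) * Real.sin ((n₁ : ℝ) * π * r) *
            Real.sin ((n₂ : ℝ) * π * r) * Real.sin ((n₃ : ℝ) * π * r) / r ^ 2|
        ≤ C * ((min (min n n₁) (min n₂ n₃) : ℕ+) : ℝ) := by
  refine ⟨33, by norm_num, fun n n₁ n₂ n₃ => ?_⟩
  have h1 := aux_bound n n₁ n₂ n₃
  have h2 : |∫ r in (0 : ℝ)..1,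
      Real.sin ((n : ℝ) * π * r) * Real.sin ((n₁ : ℝ) * π * r) *
        Real.sin ((n₂ : ℝ) * π * r) * Real.sin ((n₃ : ℝ) * π * r) / r ^ 2| ≤ 33 * (n₁ : ℝ) := by
    have h := aux_bound n₁ n n₂ n₃
    have hcg : (∫ r in (0 : ℝ)..1,
        Real.sin ((n₁ : ℝ) * π * r) * Real.sin ((n : ℝ) * π * r) *
          Real.sin ((n₂ : ℝ) * π * r) * Real.sin ((n₃ : ℝ) * π * r) / r ^ 2)
        = ∫ r in (0 : ℝ)..1,
        Real.sin ((n : ℝ) * π * r) * Real.sin ((n₁ : ℝ) * π * r) *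
          Real.sin ((n₂ : ℝ) * π * r) * Real.sin ((n₃ : ℝ) * π * r) / r ^ 2 :=
      intervalIntegral.integral_congr (fun r _ => by ring)
    rwa [hcg] at h
  have h3 : |∫ r in (0 : ℝ)..1,
      Real.sin ((n : ℝ) * π * r) * Real.sin ((n₁ : ℝ) * π * r) *
        Real.sin ((n₂ : ℝ) * π * r) * Real.sin ((n₃ : ℝ) * π * r) / r ^ 2| ≤ 33 * (n₂ : ℝ) := by
    have h := aux_bound n₂ n n₁ n₃
    have hcg : (∫ r in (0 : ℝ)..1,
        Real.sin ((n₂ : ℝ) * π * r) * Real.sin ((n : ℝ) * π * r) *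
          Real.sin ((n₁ : ℝ) * π * r) * Real.sin ((n₃ : ℝ) * π * r) / r ^ 2)
        = ∫ r in (0 : ℝ)..1,
        Real.sin ((n : ℝ) * π * r) * Real.sin ((n₁ : ℝ) * π * r) *
          Real.sin ((n₂ : ℝ) * π * r) * Real.sin ((n₃ : ℝ) * π * r) / r ^ 2 :=
      intervalIntegral.integral_congr (fun r _ => by ring)
    rwa [hcg] at h
  have h4 : |∫ r in (0 : ℝ)..1,
      Real.sin ((n : ℝ) * π * r) * Real.sin ((n₁ : ℝ) * π * r) *
        Real.sin ((n₂ : ℝ) * π * r) * Real.sin ((n₃ : ℝ) * π * r) / r ^ 2| ≤ 33 * (n₃ : ℝ) := by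
    have h := aux_bound n₃ n n₁ n₂
    have hcg : (∫ r in (0 : ℝ)..1,
        Real.sin ((n₃ : ℝ) * π * r) * Real.sin ((n : ℝ) * π * r) *
          Real.sin ((n₁ : ℝ) * π * r) * Real.sin ((n₂ : ℝ) * π * r) / r ^ 2)
        = ∫ r in (0 : ℝ)..1,
        Real.sin ((n : ℝ) * π * r) * Real.sin ((n₁ : ℝ) * π * r) *
          Real.sin ((n₂ : ℝ) * π * r) * Real.sin ((n₃ : ℝ) * π * r) / r ^ 2 :=
      intervalIntegral.integral_congr (fun r _ => by ring)
    rwa [hcg] at h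
  rcases le_total (min n n₁) (min n₂ n₃) with h | h
  · rw [min_eq_left h]
    rcases le_total n n₁ with h' | h'
    · rw [min_eq_left h']; exact h1
    · rw [min_eq_right h']; exact h2
  · rw [min_eq_right h]
    rcases le_total n₂ n₃ with h' | h'
    · rw [min_eq_left h']; exact h3
    · rw [min_eq_right h']; exact h4
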